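/- Let A be an m×n integer matrix of full rank m that is unimodular (every m×m submatrix has determinant 0, 1, or −1), and let y ∈ ℤ^m. Then every vertex of the polytope P = {x ∈ ℝ^n : A x = y, x ≥ 0} has integer coordinates; i.e., P is an integral polytope. -/

import Mathlib

open Matrix Set Function

theorem integral_polytope_of_unimodular
    {m n : ℕ} (A : Matrix (Fin m) (Fin n) ℤ) (y : Fin m → ℤ)
    (hrank : (A.map (Int.cast : ℤ → ℝ)).rank = m)
    (hunimod : ∀ g : Fin m → Fin n, Function.Injective g →
      (A.submatrix id g).det = 0 ∨ (A.submatrix id g).det = 1 ∨ (A.submatrix id g).det = -1)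
    (x : Fin n → ℝ)
    (hx : x ∈ Set.extremePoints ℝ
      {x : Fin n → ℝ | (A.map (Int.cast : ℤ → ℝ)).mulVec x = (fun i => (y i : ℝ)) ∧ ∀ j, 0 ≤ x j}) :
    ∀ j, ∃ k : ℤ, x j = (k : ℝ) := by
  classical
  obtain ⟨⟨hAx, hxnn⟩, hext⟩ := hx
  set Ar := A.map (Int.cast : ℤ → ℝ) with hArdef
  -- Key: kernel directions supported on the support of x vanish
  have key : ∀ d : Fin n → ℝ, Ar.mulVec d = 0 → (∀ j, x j = 0 → d j = 0) → d = 0 := by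
    intro d hd hsupp
    by_contra hne
    obtain ⟨j₀, hj₀⟩ : ∃ j, d j ≠ 0 := by
      by_contra h; push_neg at h; exact hne (funext h)
    set ε : ℝ := Finset.univ.inf' (Finset.univ_nonempty_iff.mpr ⟨j₀⟩)
      (fun j => if d j = 0 then 1 else x j / |d j|) with hεdef
    have hεpos : 0 < ε := by
      rw [hεdef, Finset.lt_inf'_iff]
      intro j _
      split_ifs with h
      · norm_num
      · have hxj : 0 < x j := lt_of_le_of_ne (hxnn j) fun h' => h (hsupp j h'.symm)
        have : 0 < |d j| := abs_pos.2 h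
        positivity
    have hεle : ∀ j, ε * |d j| ≤ x j := by
      intro j
      by_cases h : d j = 0
      · simpa [h] using hxnn j
      · have h1 : ε ≤ x j / |d j| := by
          have := Finset.inf'_le (b := j)
            (fun j => if d j = 0 then 1 else x j / |d j|) (Finset.mem_univ j)
          rwa [if_neg h] at this
        rwa [le_div_iff₀ (abs_pos.2 h)] at h1
    have hmem : ∀ (s : ℝ), |s| = ε → (x + s • d) ∈
        {x : Fin n → ℝ | Ar.mulVec x = (fun i => (y i : ℝ)) ∧ ∀ j, 0 ≤ x j} := by
      intro s hs
      constructor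
      · rw [Matrix.mulVec_add, hAx, Matrix.mulVec_smul, hd]
        funext i; simp
      · intro j
        have h1 : |s * d j| ≤ x j := by
          rw [abs_mul, hs]; exact hεle j
        have := neg_abs_le (s * d j)
        simp only [Pi.add_apply, Pi.smul_apply, smul_eq_mul]
        linarith
    have h1 := hmem ε (abs_of_pos hεpos)
    have h2 := hmem (-ε) (by rw [abs_neg]; exact abs_of_pos hεpos)
    have hseg : x ∈ openSegment ℝ (x + ε • d) (x + (-ε) • d) := by
      refine ⟨1/2, 1/2, by norm_num, by norm_num, by norm_num, ?_⟩
      funext j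
      simp only [Pi.add_apply, Pi.smul_apply, smul_eq_mul, neg_mul]
      ring
    have := hext h1 h2 hseg
    have hd0 : ε * d j₀ = 0 := by
      have := congrFun this j₀
      simp only [Pi.add_apply, Pi.smul_apply, smul_eq_mul] at this
      linarith
    exact hj₀ (by
      rcases mul_eq_zero.1 hd0 with h | h
      · exact absurd h (ne_of_gt hεpos)
      · exact h)
  -- columns of Ar
  set v : Fin n → (Fin m → ℝ) := fun j => Arᵀ j with hvdef
  set S : Set (Fin n) := {j | x j ≠ 0} with hSdef
  have hindepS : LinearIndependent ℝ (fun j : S => v j) := by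
    rw [Fintype.linearIndependent_iff]
    intro c hc
    set d : Fin n → ℝ := fun j => if h : j ∈ S then c ⟨j, h⟩ else 0 with hddef
    have hsum : ∑ j : Fin n, d j • v j = ∑ j : S, c j • v j := by
      have h1 : ∑ j : Fin n, d j • v j = ∑ j ∈ S.toFinset, d j • v j :=
        (Finset.sum_subset (Finset.subset_univ _) (fun j _ hj => by
          simp only [hddef]
          rw [dif_neg (by simpa using hj), zero_smul])).symm
      rw [h1, Finset.sum_subtype S.toFinset (fun j => Set.mem_toFinset) (fun j => d j • v j)]
      refine Finset.sum_congr rfl fun j _ => ?_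
      simp only [hddef]
      rw [dif_pos j.2]
    have hdker : Ar.mulVec d = 0 := by
      funext i
      have := congrFun (hsum.trans hc) i
      simpa [hvdef, Matrix.mulVec, dotProduct, Matrix.transpose_apply, mul_comm] using this
    have hd0 : d = 0 := key d hdker fun j hj => by
      simp only [hddef]
      rw [dif_neg (by simp [hSdef, hj])]
    intro j
    have := congrFun hd0 j
    simp only [hddef] at this
    rw [dif_pos j.2] at this
    simpa using this
  have hinjS : Set.InjOn v S := by
    intro a ha b hb hab
    have := hindepS.injective (show v ↑(⟨a, ha⟩ : S) = v ↑(⟨b, hb⟩ : S) from hab)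
    exact Subtype.ext_iff.1 this
  -- span of all columns is everything
  have hspan : Submodule.span ℝ (Set.range v) = ⊤ := by
    have h1 : Submodule.span ℝ (Set.range v) = LinearMap.range Ar.mulVecLin := by
      rw [Matrix.range_mulVecLin]; rfl
    rw [h1]
    apply Submodule.eq_top_of_finrank_eq
    rw [← Matrix.rank, hrank]
    simp [Module.finrank_pi]
  -- extend the independent set of columns on S to a basis within the columns
  have himg : LinearIndepOn ℝ id (v '' S) := LinearIndepOn.id_image hindepS
  set B : Set (Fin m → ℝ) := himg.extend (Set.image_subset_range v S) with hBdef
  have hsub1 : v '' S ⊆ B := himg.subset_extend _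
  have hsub2 : B ⊆ Set.range v := himg.extend_subset _
  have hindepB : LinearIndependent ℝ ((↑) : B → (Fin m → ℝ)) :=
    himg.linearIndepOn_extend _
  have hspanB : Submodule.span ℝ B = ⊤ := by
    rw [himg.span_extend_eq_span, hspan]
  have hBfin : B.Finite := (Set.finite_range v).subset hsub2
  haveI : Fintype B := hBfin.fintype
  have hcard : Fintype.card B = m := by
    let bB : Module.Basis B ℝ (Fin m → ℝ) := Module.Basis.mk hindepB (by
      rw [Subtype.range_coe_subtype]
      simp only [Set.setOf_mem_eq]
      rw [hspanB])
    have := Module.finrank_eq_card_basis bB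
    simp [Module.finrank_pi] at this
    rw [← Nat.card_coe_set_eq, Nat.card_eq_fintype_card] at this
    omega
  -- choose preimages
  have hpick : ∀ b : B, ∃ j : Fin n, v j = b ∧ ((b : Fin m → ℝ) ∈ v '' S → j ∈ S) := by
    intro b
    by_cases h : (b : Fin m → ℝ) ∈ v '' S
    · obtain ⟨j, hjS, hj⟩ := h
      exact ⟨j, hj, fun _ => hjS⟩
    · obtain ⟨j, hj⟩ := hsub2 b.2
      exact ⟨j, hj, fun h' => absurd h' h⟩
  choose pick hpick1 hpick2 using hpick
  have hpickinj : Function.Injective pick := by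
    intro a b hab
    apply Subtype.ext
    rw [← hpick1 a, ← hpick1 b, hab]
  let e : Fin m ≃ B := (Fintype.equivFinOfCardEq hcard).symm
  set g : Fin m → Fin n := fun k => pick (e k) with hgdef
  have hginj : Function.Injective g := hpickinj.comp e.injective
  have hSrange : ∀ j ∈ S, ∃ k, g k = j := by
    intro j hj
    have hb : v j ∈ B := hsub1 ⟨j, hj, rfl⟩
    refine ⟨e.symm ⟨v j, hb⟩, ?_⟩
    rw [hgdef]
    simp only [Equiv.apply_symm_apply]
    exact hinjS (hpick2 ⟨v j, hb⟩ ⟨j, hj, rfl⟩) hj (hpick1 ⟨v j, hb⟩)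
  -- the square submatrix is invertible over ℤ
  set M : Matrix (Fin m) (Fin m) ℤ := A.submatrix id g with hMdef
  have hMr : Ar.submatrix id g = M.map (Int.cast : ℤ → ℝ) := by
    rw [hMdef, hArdef]
    exact Matrix.submatrix_map _ _ _ _
  have hMrUnit : IsUnit (Ar.submatrix id g) := by
    rw [← Matrix.linearIndependent_cols_iff_isUnit]
    have : (fun k => (Ar.submatrix id g)ᵀ k) = (↑) ∘ (fun k => e k) := by
      funext k
      have : v (g k) = (e k : Fin m → ℝ) := hpick1 (e k)
      funext i
      simpa [hvdef, Matrix.transpose_apply, Matrix.submatrix_apply] using congrFun this i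
    rw [show (Ar.submatrix id g).col = fun k => (Ar.submatrix id g)ᵀ k from rfl, this]
    exact hindepB.comp _ e.injective
  have hdetM : IsUnit M.det := by
    have hdetne : (M.det : ℝ) ≠ 0 := by
      have h1 : ((M.det : ℤ) : ℝ) = (M.map (Int.cast : ℤ → ℝ)).det :=
        RingHom.map_det (Int.castRingHom ℝ) M
      rw [h1, ← hMr]
      exact (Matrix.isUnit_iff_isUnit_det _).1 hMrUnit |>.ne_zero
    have : M.det ≠ 0 := fun h => hdetne (by rw [h]; simp)
    rcases hunimod g hginj with h | h | h
    · exact absurd h this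
    · rw [h]; exact isUnit_one
    · rw [h]; exact isUnit_one.neg
  haveI : Invertible M := M.invertibleOfIsUnitDet hdetM
  set N : Matrix (Fin m) (Fin m) ℤ := ⅟M with hNdef
  -- the equation for x ∘ g
  have hMeq : (M.map (Int.cast : ℤ → ℝ)).mulVec (x ∘ g) = fun i => (y i : ℝ) := by
    funext i
    have h1 : (M.map (Int.cast : ℤ → ℝ)).mulVec (x ∘ g) i
        = ∑ k : Fin m, ((A i (g k) : ℤ) : ℝ) * x (g k) := by
      simp [Matrix.mulVec, dotProduct, hMdef, Matrix.submatrix_apply]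
    have h2 : ∑ k : Fin m, ((A i (g k) : ℤ) : ℝ) * x (g k)
        = ∑ j ∈ Finset.univ.image g, ((A i j : ℤ) : ℝ) * x j := by
      rw [Finset.sum_image (fun a _ b _ hab => hginj hab)]
    have h3 : ∑ j ∈ Finset.univ.image g, ((A i j : ℤ) : ℝ) * x j
        = ∑ j : Fin n, ((A i j : ℤ) : ℝ) * x j := by
      apply Finset.sum_subset (Finset.subset_univ _)
      intro j _ hj
      have hjS : j ∉ S := by
        intro hjS
        obtain ⟨k, hk⟩ := hSrange j hjS
        exact hj (Finset.mem_image.2 ⟨k, Finset.mem_univ k, hk⟩)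
      have : x j = 0 := by
        by_contra h; exact hjS h
      rw [this, mul_zero]
    have h4 : ∑ j : Fin n, ((A i j : ℤ) : ℝ) * x j = Ar.mulVec x i := by
      simp [Matrix.mulVec, dotProduct, hArdef]
    rw [h1, h2, h3, h4, hAx]
  have hNM : (N.map (Int.cast : ℤ → ℝ)) * (M.map (Int.cast : ℤ → ℝ)) = 1 := by
    have h1 : ((N * M).map (Int.cast : ℤ → ℝ)) = (N.map Int.cast) * (M.map Int.cast) :=
      Matrix.map_mul (f := Int.castRingHom ℝ)
    rw [← h1, hNdef, invOf_mul_self]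
    exact Matrix.map_one _ Int.cast_zero Int.cast_one
  have hxg : x ∘ g = (N.map (Int.cast : ℤ → ℝ)).mulVec (fun l => (y l : ℝ)) := by
    calc x ∘ g = (1 : Matrix (Fin m) (Fin m) ℝ).mulVec (x ∘ g) := by
          rw [Matrix.one_mulVec]
      _ = ((N.map (Int.cast : ℤ → ℝ)) * (M.map (Int.cast : ℤ → ℝ))).mulVec (x ∘ g) := by
          rw [hNM]
      _ = (N.map (Int.cast : ℤ → ℝ)).mulVec ((M.map (Int.cast : ℤ → ℝ)).mulVec (x ∘ g)) := by
          rw [Matrix.mulVec_mulVec]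
      _ = (N.map (Int.cast : ℤ → ℝ)).mulVec (fun l => (y l : ℝ)) := by rw [hMeq]
  -- conclude
  intro j
  by_cases hxj : x j = 0
  · exact ⟨0, by simp [hxj]⟩
  · obtain ⟨k, hk⟩ := hSrange j hxj
    refine ⟨∑ l : Fin m, N k l * y l, ?_⟩
    have := congrFun hxg k
    simp only [Function.comp_apply, hk] at this
    rw [this]
    simp only [Matrix.mulVec, dotProduct, Matrix.map_apply]
    push_cast
    rfl
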